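/- Let M be a monoid equipped with a linear order ≤, and let k ≥ 1. The maps sort_≤ and first_k on M-pigmented words commute (sort_≤(first_k(p)) = first_k(sort_≤(p)) for every M-pigmented word p) if and only if M is trivial, i.e., M has exactly one element. -/

import Mathlib

/-- An `M`-pigmented word of arity `n`: a list of letters `(i, α)` whose value is
`i ∈ Fin n` (representing the value `i + 1 ∈ {1, …, n}`) and whose pigment is `α ∈ M`. -/
abbrev PW (M : Type*) (n : ℕ) : Type _ := List (Fin n × M)

/-- `firstKAux k pre p` keeps those letters of `p` whose position is a left
`k`-witness, given that the prefix `pre` has already been read. -/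
def firstKAux {M : Type*} {n : ℕ} (k : ℕ) : PW M n → PW M n → PW M n
  | _, [] => []
  | pre, l :: t =>
    if pre.countP (fun x => decide (x.1 = l.1)) < k
    then l :: firstKAux k (pre ++ [l]) t
    else firstKAux k (pre ++ [l]) t

/-- `firstK k p` keeps, for each value, the first `k` occurrences of that value in `p`
(the letters at left `k`-witness positions). -/
def firstK {M : Type*} {n : ℕ} (k : ℕ) (p : PW M n) : PW M n := firstKAux k [] p

/-- The order on pigmented letters: compare values first, then pigments. -/
def letterLE {M : Type*} [LinearOrder M] {n : ℕ} (a b : Fin n × M) : Prop :=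
  a.1 < b.1 ∨ (a.1 = b.1 ∧ a.2 ≤ b.2)

instance {M : Type*} [LinearOrder M] {n : ℕ} : DecidableRel (letterLE (M := M) (n := n)) :=
  fun a b => by unfold letterLE; infer_instance

/-- `sortW p` is the weakly increasing rearrangement of `p` for the letter order. -/
def sortW {M : Type*} [LinearOrder M] {n : ℕ} (p : PW M n) : PW M n :=
  p.insertionSort letterLE


section Aux

variable {M : Type*} {n : ℕ}

lemma firstKAux_sublist (k : ℕ) : ∀ (p pre : PW M n), List.Sublist (firstKAux k pre p) p
  | [], _ => List.Sublist.refl _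
  | l :: t, pre => by
    unfold firstKAux
    split
    · exact (firstKAux_sublist k t (pre ++ [l])).cons₂ l
    · exact (firstKAux_sublist k t (pre ++ [l])).cons l

lemma countP_firstKAux (k : ℕ) (v : Fin n) :
    ∀ (p pre : PW M n),
      (firstKAux k pre p).countP (fun y => decide (y.1 = v)) =
        min k (pre.countP (fun y => decide (y.1 = v)) + p.countP (fun y => decide (y.1 = v)))
          - pre.countP (fun y => decide (y.1 = v))
  | [], pre => by
    simp only [firstKAux, List.countP_nil, Nat.add_zero]
    omega
  | l :: t, pre => by
    have IH := countP_firstKAux k v t (pre ++ [l])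
    rw [List.countP_append] at IH
    unfold firstKAux
    by_cases hv : l.1 = v
    · subst hv
      simp only [List.countP_cons, List.countP_nil, decide_eq_true_eq, eq_self_iff_true,
        if_true, Nat.zero_add] at IH ⊢
      split
      all_goals try simp only [List.countP_cons, decide_eq_true_eq, eq_self_iff_true, if_true]
      all_goals omega
    · simp only [List.countP_cons, List.countP_nil, decide_eq_true_eq, hv, if_false,
        Nat.add_zero, Nat.zero_add] at IH ⊢
      split
      all_goals try simp only [List.countP_cons, decide_eq_true_eq, hv, if_false, Nat.add_zero]
      all_goals omega

lemma countP_firstK (k : ℕ) (v : Fin n) (p : PW M n) :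
    (firstK k p).countP (fun y => decide (y.1 = v)) =
      min k (p.countP (fun y => decide (y.1 = v))) := by
  have := countP_firstKAux (M := M) k v p []
  simpa [firstK] using this

variable [LinearOrder M]

lemma letterLE_trans : ∀ a b c : Fin n × M, letterLE a b → letterLE b c → letterLE a c := by
  rintro a b c (h1 | ⟨h1, h1'⟩) (h2 | ⟨h2, h2'⟩)
  · exact Or.inl (h1.trans h2)
  · exact Or.inl (h2 ▸ h1)
  · exact Or.inl (h1 ▸ h2)
  · exact Or.inr ⟨h1.trans h2, h1'.trans h2'⟩

lemma letterLE_total : ∀ a b : Fin n × M, letterLE a b ∨ letterLE b a := by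
  intro a b
  rcases lt_trichotomy a.1 b.1 with h | h | h
  · exact Or.inl (Or.inl h)
  · rcases le_total a.2 b.2 with h2 | h2
    · exact Or.inl (Or.inr ⟨h, h2⟩)
    · exact Or.inr (Or.inr ⟨h.symm, h2⟩)
  · exact Or.inr (Or.inl h)

instance : IsTrans (Fin n × M) letterLE := ⟨letterLE_trans⟩
instance : IsTotal (Fin n × M) letterLE := ⟨letterLE_total⟩

omit [LinearOrder M] in
lemma firstKAux_one (k : ℕ) :
    ∀ (p pre : PW M 1), firstKAux k pre p = p.take (k - pre.length)
  | [], pre => by simp [firstKAux]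
  | l :: t, pre => by
    unfold firstKAux
    have hcnt : pre.countP (fun x => decide (x.1 = l.1)) = pre.length := by
      apply List.countP_eq_length.mpr
      intro a _
      simp [Subsingleton.elim a.1 l.1]
    rw [hcnt]
    have IH := firstKAux_one k t (pre ++ [l])
    rw [IH]
    split
    · rename_i h
      have : k - pre.length = (k - (pre ++ [l]).length) + 1 := by
        simp only [List.length_append, List.length_singleton]; omega
      rw [this, List.take_succ_cons]
    · rename_i h
      have h1 : k - pre.length = 0 := by omega
      have h2 : k - (pre ++ [l]).length = 0 := by
        simp only [List.length_append, List.length_singleton]; omega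
      rw [h1, h2]
      simp

omit [LinearOrder M] in
lemma firstK_one (k : ℕ) (p : PW M 1) : firstK k p = p.take k := by
  simp [firstK, firstKAux_one]

lemma orderedInsert_replicate_of_not_le (m : ℕ) (x y : Fin n × M) (h : ¬ letterLE x y) :
    (List.replicate m y).orderedInsert letterLE x = List.replicate m y ++ [x] := by
  induction m with
  | zero => simp
  | succ m ih =>
    rw [List.replicate_succ, List.orderedInsert, if_neg h, ih]
    simp [List.replicate_succ]

lemma insertionSort_replicate (m : ℕ) (y : Fin n × M) :
    (List.replicate m y).insertionSort letterLE = List.replicate m y := by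
  apply List.Pairwise.insertionSort_eq
  exact List.pairwise_replicate.mpr (Or.inr (Or.inr ⟨rfl, le_refl _⟩))

lemma not_letterLE_of_lt {a b : M} (h : a < b) :
    ¬ letterLE ((0 : Fin 1), b) ((0 : Fin 1), a) := by
  rintro (h1 | ⟨_, h2⟩)
  · exact absurd h1 (lt_irrefl _)
  · exact absurd h2 (not_le.mpr h)

lemma no_commute_of_lt (k : ℕ) (hk : 1 ≤ k)
    (h : ∀ (nn : ℕ) (p : PW M nn), sortW (firstK k p) = firstK k (sortW p))
    {a b : M} (hab : a < b) : False := by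
  set x : Fin 1 × M := ((0 : Fin 1), b) with hx
  set y : Fin 1 × M := ((0 : Fin 1), a) with hy
  have hnle : ¬ letterLE x y := not_letterLE_of_lt hab
  have key := h 1 (x :: List.replicate k y)
  have hsort : sortW (x :: List.replicate k y) = List.replicate k y ++ [x] := by
    unfold sortW
    rw [List.insertionSort_cons]
    rw [insertionSort_replicate]
    exact orderedInsert_replicate_of_not_le k x y hnle
  have hfirstLHS : firstK k (x :: List.replicate k y) = x :: List.replicate (k - 1) y := by
    rw [firstK_one, List.take_cons (by omega), List.take_replicate]
    congr 1
    congr 1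
    omega
  have hfirstRHS : firstK k (List.replicate k y ++ [x]) = List.replicate k y := by
    rw [firstK_one]
    rw [List.take_append_of_le_length (by simp)]
    simp
  rw [hfirstLHS, hsort, hfirstRHS] at key
  have hsortL : sortW (x :: List.replicate (k - 1) y) = List.replicate (k - 1) y ++ [x] := by
    unfold sortW
    rw [List.insertionSort_cons, insertionSort_replicate]
    exact orderedInsert_replicate_of_not_le _ x y hnle
  rw [hsortL] at key
  have hmem : x ∈ List.replicate (k - 1) y ++ [x] := by simp
  rw [key] at hmem
  have := (List.eq_of_mem_replicate hmem)
  rw [hx, hy] at this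
  exact absurd (congrArg Prod.snd this) (ne_of_gt hab)

end Aux

/-- For `k ≥ 1`, the maps `sortW` and `firstK k` commute on all `M`-pigmented words if
and only if the monoid `M` is trivial (it has exactly one element). -/
theorem sort_firstK_commute_iff_trivial (M : Type*) [Monoid M] [LinearOrder M]
    (k : ℕ) (hk : 1 ≤ k) :
    (∀ (n : ℕ) (p : PW M n), sortW (firstK k p) = firstK k (sortW p)) ↔
      (∀ a b : M, a = b) := by
  constructor
  · intro h a b
    rcases lt_trichotomy a b with hab | hab | hab
    · exact absurd (no_commute_of_lt k hk h hab) not_false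
    · exact hab
    · exact absurd (no_commute_of_lt k hk h hab) not_false
  · intro htriv nn p
    haveI : IsAntisymm (Fin nn × M) letterLE := by
      constructor
      rintro a b (h1 | ⟨h1, _⟩) (h2 | ⟨h2, _⟩)
      · exact absurd (h1.trans h2) (lt_irrefl _)
      · exact absurd h1 (h2 ▸ lt_irrefl _)
      · exact absurd h2 (h1 ▸ lt_irrefl _)
      · exact Prod.ext h1 (htriv _ _)
    refine (fun hp h1 h2 => List.Perm.eq_of_pairwise' (r := letterLE) h1 h2 hp) ?_ ?_ ?_
    · -- permutation via counts
      rw [List.perm_iff_count]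
      intro x
      have hpt : ∀ q : PW M nn,
          q.countP (fun y => decide (y = x)) = q.countP (fun y => decide (y.1 = x.1)) := by
        intro q
        apply List.countP_congr
        intro y _
        simp only [decide_eq_true_eq]
        exact ⟨fun h => by rw [h], fun h => Prod.ext h (htriv _ _)⟩
      have hperm1 := (List.perm_insertionSort letterLE (firstK k p)).countP_eq
          (fun y => decide (y.1 = x.1))
      have hperm2 := (List.perm_insertionSort letterLE p).countP_eq
          (fun y => decide (y.1 = x.1))
      simp only [List.count_eq_countP, Bool.beq_eq_decide_eq]
      show (sortW (firstK k p)).countP (fun y => decide (y = x)) =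
        (firstK k (sortW p)).countP (fun y => decide (y = x))
      rw [hpt, hpt]
      unfold sortW
      rw [hperm1, countP_firstK, countP_firstK, hperm2]
    · exact List.pairwise_insertionSort letterLE (firstK k p)
    · exact List.Pairwise.sublist (firstKAux_sublist k (sortW p) [])
        (List.pairwise_insertionSort letterLE p)
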